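/- For any reals d, d' and σ > 0, the integral over all real t of |Φ((t−d')/σ) − Φ((t−d)/σ)| dt equals |d − d'|. -/
import Mathlib

open MeasureTheory Real Filter

noncomputable def phi (t : ℝ) : ℝ := Real.exp (-t^2/2) / Real.sqrt (2*Real.pi)

noncomputable def Phi (x : ℝ) : ℝ := ∫ s in Set.Iic x, phi s

lemma phi_nonneg (t : ℝ) : 0 ≤ phi t := by
  unfold phi
  positivity

lemma phi_eq (t : ℝ) : phi t = (Real.sqrt (2*Real.pi))⁻¹ * Real.exp (-(1/2) * t^2) := by
  unfold phi
  rw [inv_mul_eq_div]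
  ring_nf

lemma phi_integrable : Integrable phi := by
  have : Integrable (fun t : ℝ => (Real.sqrt (2*Real.pi))⁻¹ * Real.exp (-(1/2) * t^2)) :=
    (integrable_exp_neg_mul_sq (by norm_num)).const_mul _
  exact this.congr (Filter.Eventually.of_forall fun t => (phi_eq t).symm)

lemma integral_phi : ∫ t, phi t = 1 := by
  simp_rw [phi_eq]
  rw [integral_const_mul, integral_gaussian]
  rw [← Real.sqrt_inv]
  rw [← Real.sqrt_mul (by positivity)]
  norm_num
  field_simp

@[fun_prop] lemma phi_measurable : Measurable phi := by
  unfold phi; fun_prop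

lemma Phi_sub {a b : ℝ} (hab : a ≤ b) : Phi b - Phi a = ∫ s in Set.Ioc a b, phi s := by
  unfold Phi
  rw [intervalIntegral.integral_Iic_sub_Iic phi_integrable.integrableOn phi_integrable.integrableOn,
    intervalIntegral.integral_of_le hab]

lemma Phi_mono : Monotone Phi := by
  intro a b hab
  have h1 := Phi_sub hab
  have h2 : 0 ≤ ∫ s in Set.Ioc a b, phi s :=
    setIntegral_nonneg measurableSet_Ioc (fun s _ => phi_nonneg s)
  linarith

lemma key (d d' σ : ℝ) (hσ : 0 < σ) (h : d' ≤ d) :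
    ∫ t : ℝ, (Phi ((t - d') / σ) - Phi ((t - d) / σ)) = d - d' := by
  have hle : ∀ t : ℝ, (t - d) / σ ≤ (t - d') / σ := fun t => by gcongr
  have hrw : ∀ t : ℝ, Phi ((t - d') / σ) - Phi ((t - d) / σ)
      = ∫ s in Set.Ioc ((t - d) / σ) ((t - d') / σ), phi s := fun t => Phi_sub (hle t)
  set A : Set (ℝ × ℝ) := {p | (p.1 - d) / σ < p.2 ∧ p.2 ≤ (p.1 - d') / σ} with hAdef
  have hA : MeasurableSet A := by
    apply MeasurableSet.inter
    · exact measurableSet_lt (by fun_prop) measurable_snd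
    · exact measurableSet_le measurable_snd (by fun_prop)
  have hmem : ∀ t s : ℝ, s ∈ Set.Ioc ((t - d) / σ) ((t - d') / σ) ↔ (t, s) ∈ A := by
    intro t s; rfl
  -- integrand nonneg and measurable
  have hnn : ∀ t : ℝ, 0 ≤ Phi ((t - d') / σ) - Phi ((t - d) / σ) := fun t =>
    sub_nonneg.2 (Phi_mono (hle t))
  have hmeas : Measurable (fun t : ℝ => Phi ((t - d') / σ) - Phi ((t - d) / σ)) := by
    apply Measurable.sub <;> exact Phi_mono.measurable.comp (by fun_prop)
  rw [MeasureTheory.integral_eq_lintegral_of_nonneg_ae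
    (Filter.Eventually.of_forall hnn) hmeas.aestronglyMeasurable]
  have hofr : ∀ t : ℝ, ENNReal.ofReal (Phi ((t - d') / σ) - Phi ((t - d) / σ))
      = ∫⁻ s in Set.Ioc ((t - d) / σ) ((t - d') / σ), ENNReal.ofReal (phi s) := by
    intro t
    rw [hrw t]
    exact ofReal_integral_eq_lintegral_ofReal phi_integrable.integrableOn
      (Filter.Eventually.of_forall fun s => phi_nonneg s)
  simp_rw [hofr]
  have hind : ∀ t : ℝ, (∫⁻ s in Set.Ioc ((t - d) / σ) ((t - d') / σ), ENNReal.ofReal (phi s))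
      = ∫⁻ s, A.indicator (fun p => ENNReal.ofReal (phi p.2)) (t, s) := by
    intro t
    rw [← lintegral_indicator measurableSet_Ioc]
    exact lintegral_congr fun s => rfl
  simp_rw [hind]
  rw [lintegral_lintegral_swap]
  · have hinner : ∀ s : ℝ, (∫⁻ t, A.indicator (fun p => ENNReal.ofReal (phi p.2)) (t, s))
        = ENNReal.ofReal (phi s) * ENNReal.ofReal (d - d') := by
      intro s
      have hset : ∀ t : ℝ, A.indicator (fun p => ENNReal.ofReal (phi p.2)) (t, s)
          = (Set.Ico (d' + σ * s) (d + σ * s)).indicator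
              (fun _ => ENNReal.ofReal (phi s)) t := by
        intro t
        simp only [Set.indicator_apply, hAdef, Set.mem_setOf_eq, Set.mem_Ico]
        apply if_congr _ rfl rfl
        rw [div_lt_iff₀ hσ, le_div_iff₀ hσ]
        constructor
        · rintro ⟨h1, h2⟩; constructor <;> linarith
        · rintro ⟨h1, h2⟩; constructor <;> linarith
      simp_rw [hset]
      rw [lintegral_indicator measurableSet_Ico]
      rw [setLIntegral_const, Real.volume_Ico]
      have h2 : d + σ * s - (d' + σ * s) = d - d' := by ring
      rw [h2]
    simp_rw [hinner]
    rw [lintegral_mul_const _ (by fun_prop)]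
    have : (∫⁻ s, ENNReal.ofReal (phi s)) = 1 := by
      rw [← ofReal_integral_eq_lintegral_ofReal phi_integrable
        (Filter.Eventually.of_forall fun s => phi_nonneg s), integral_phi, ENNReal.ofReal_one]
    rw [this, one_mul, ENNReal.toReal_ofReal (by linarith)]
  · apply Measurable.aemeasurable
    exact (Measurable.indicator (by fun_prop) hA)

theorem stmt6 (d d' σ : ℝ) (hσ : 0 < σ) :
    ∫ t : ℝ, |Phi ((t - d') / σ) - Phi ((t - d) / σ)| = |d - d'| := by
  rcases le_total d' d with h | h
  · have hle : ∀ t : ℝ, (t - d) / σ ≤ (t - d') / σ := fun t => by gcongr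
    have : ∀ t : ℝ, |Phi ((t - d') / σ) - Phi ((t - d) / σ)|
        = Phi ((t - d') / σ) - Phi ((t - d) / σ) := fun t =>
      abs_of_nonneg (sub_nonneg.2 (Phi_mono (hle t)))
    simp_rw [this]
    rw [key d d' σ hσ h, abs_of_nonneg (by linarith)]
  · have hle : ∀ t : ℝ, (t - d') / σ ≤ (t - d) / σ := fun t => by gcongr
    have : ∀ t : ℝ, |Phi ((t - d') / σ) - Phi ((t - d) / σ)|
        = Phi ((t - d) / σ) - Phi ((t - d') / σ) := fun t => by
      rw [abs_sub_comm]
      exact abs_of_nonneg (sub_nonneg.2 (Phi_mono (hle t)))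
    simp_rw [this]
    rw [key d' d σ hσ h, abs_sub_comm, abs_of_nonneg (by linarith)]
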